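/- Let d ≥ 3 be an integer, n an integer with 1 ≤ n ≤ d − 2, and let p₁ ≤ p₂ ≤ ⋯ ≤ p_d, λ, A be real numbers. If p₁ + ⋯ + p_n − (λ/2)A ≥ 0 and p₁ + ⋯ + p_{d−n−1} + (λ/2)A ≥ 0, then 2p₁ + p₂ + ⋯ + p_{d−2} ≥ 0. (The gravitational wall inequalities are consequences of the ordering inequalities and the electric and magnetic wall inequalities of an n-form.) -/

import Mathlib

/-- The dominant gravitational wall inequality `2p₁ + p₂ + ⋯ + p_{d−2} ≥ 0`
is a consequence of the ordering of the Kasner exponents together with the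
electric and magnetic wall inequalities of an `n`-form. -/
theorem gravitational_wall_from_form_walls (d n : ℕ) (hd : 3 ≤ d)
    (hn₁ : 1 ≤ n) (hn₂ : n ≤ d - 2)
    (p : Fin d → ℝ) (lam A : ℝ) (hmono : Monotone p)
    (helec : (∑ i ∈ Finset.univ.filter fun i : Fin d => (i : ℕ) < n, p i)
        - (lam / 2) * A ≥ 0)
    (hmagn : (∑ i ∈ Finset.univ.filter fun i : Fin d => (i : ℕ) < d - n - 1, p i)
        + (lam / 2) * A ≥ 0) :
    2 * p ⟨0, by omega⟩
      + (∑ i ∈ Finset.univ.filter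
          fun i : Fin d => 1 ≤ (i : ℕ) ∧ (i : ℕ) < d - 2, p i) ≥ 0 := by
  set q : ℕ → ℝ := fun i => p ⟨min i (d-1), by omega⟩ with hq
  have hqmono : Monotone q := by
    intro a b hab
    exact hmono (by simp only [Fin.mk_le_mk]; omega)
  have hqeq : ∀ (i : ℕ) (h : i < d), q i = p ⟨i, h⟩ := by
    intro i h
    simp only [hq]
    exact congrArg p (Fin.ext (by simp; omega))
  have key : ∀ k, k ≤ d → (∑ i ∈ Finset.univ.filter fun i : Fin d => (i:ℕ) < k, p i)
      = ∑ i ∈ Finset.range k, q i := by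
    intro k hk
    rw [Finset.sum_filter]
    have : ∀ i : Fin d, (if (i:ℕ) < k then p i else 0)
        = (fun j : ℕ => if j < k then q j else 0) (i : ℕ) := by
      intro i
      simp only []
      by_cases h : (i:ℕ) < k
      · simp [h, hqeq i i.isLt]
      · simp [h]
    rw [Finset.sum_congr rfl (fun i _ => this i),
      Fin.sum_univ_eq_sum_range (fun j => if j < k then q j else 0) d,
      ← Finset.sum_filter]
    congr 1
    ext j
    simp only [Finset.mem_filter, Finset.mem_range]
    omega
  have keymid : (∑ i ∈ Finset.univ.filter
        fun i : Fin d => 1 ≤ (i : ℕ) ∧ (i : ℕ) < d - 2, p i)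
      = ∑ i ∈ Finset.Ico 1 (d-2), q i := by
    rw [Finset.sum_filter]
    have : ∀ i : Fin d, (if 1 ≤ (i:ℕ) ∧ (i:ℕ) < d-2 then p i else 0)
        = (fun j : ℕ => if 1 ≤ j ∧ j < d-2 then q j else 0) (i : ℕ) := by
      intro i
      by_cases h : 1 ≤ (i:ℕ) ∧ (i:ℕ) < d-2
      · simp [h, hqeq i i.isLt]
      · simp [h]
    rw [Finset.sum_congr rfl (fun i _ => this i),
      Fin.sum_univ_eq_sum_range (fun j => if 1 ≤ j ∧ j < d-2 then q j else 0) d,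
      ← Finset.sum_filter]
    congr 1
    ext j
    simp only [Finset.mem_filter, Finset.mem_range, Finset.mem_Ico]
    omega
  set m := d - n - 1 with hm
  have hmd : m ≤ d - 2 := by omega
  have h1 : ∑ i ∈ Finset.range (d-2), q i
      = (∑ i ∈ Finset.range m, q i) + ∑ i ∈ Finset.Ico m (d-2), q i := by
    rw [Finset.range_eq_Ico, Finset.range_eq_Ico]
    exact (Finset.sum_Ico_consecutive q (Nat.zero_le m) hmd).symm
  have h2 : ∑ i ∈ Finset.Ico 1 n, q i ≤ ∑ i ∈ Finset.Ico m (d-2), q i := by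
    rw [Finset.sum_Ico_eq_sum_range, Finset.sum_Ico_eq_sum_range]
    have hlen : d - 2 - m = n - 1 := by omega
    rw [hlen]
    apply Finset.sum_le_sum
    intro j _
    exact hqmono (by omega)
  have h3 : ∑ i ∈ Finset.range n, q i = q 0 + ∑ i ∈ Finset.Ico 1 n, q i := by
    rw [Finset.range_eq_Ico, ← Finset.sum_Ico_consecutive _ (Nat.zero_le 1) (by omega : 1 ≤ n)]
    simp
  have h4 : ∑ i ∈ Finset.range (d-2), q i = q 0 + ∑ i ∈ Finset.Ico 1 (d-2), q i := by
    rw [Finset.range_eq_Ico, ← Finset.sum_Ico_consecutive _ (Nat.zero_le 1) (by omega : 1 ≤ d-2)]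
    simp
  have hp0 : p ⟨0, by omega⟩ = q 0 := (hqeq 0 (by omega)).symm
  rw [key n (by omega)] at helec
  rw [key (d-n-1) (by omega)] at hmagn
  rw [keymid, hp0]
  rw [← hm] at hmagn
  linarith
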